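/- Fix a real number q > 1 and δ ∈ [−1/2, 0). Then for every integer m ≥ 0: (a) φ_{iδ}(2m+1) is a positive real number; (b) for every real α with −τ/2 < α < τ/2 and α ≠ 0, |φ_{α+iδ}(2m+1)| < φ_{iδ}(2m+1); and (c) φ_{τ/2+iδ}(2m+1) = −φ_{iδ}(2m+1). -/

import Mathlib

/-- `q^w = exp(w log q)`. -/
noncomputable def qpow (q : ℝ) (w : ℂ) : ℂ := Complex.exp (w * (Real.log q : ℂ))

/-- `τ = 2π / log q`. -/
noncomputable def tauq (q : ℝ) : ℝ := 2 * Real.pi / Real.log q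

/-- The elementary spherical function value `φ_z(n)` on a homogeneous tree of degree
`q+1`: `φ_z(0) = 1` and for `n ≥ 1`,
`φ_z(n) = (1/(q+1))·[q^{1-n/2}(q^{iz(n+1)} - q^{-iz(n+1)}) - q^{-n/2}(q^{iz(n-1)} - q^{-iz(n-1)})] / (q^{iz} - q^{-iz})`. -/
noncomputable def phiSph (q : ℝ) (z : ℂ) (n : ℕ) : ℂ :=
  if n = 0 then 1 else
    (1 / ((q : ℂ) + 1)) *
      ((qpow q (1 - (n : ℂ) / 2) *
          (qpow q (Complex.I * z * ((n : ℂ) + 1)) - qpow q (-(Complex.I * z) * ((n : ℂ) + 1))) -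
        qpow q (-(n : ℂ) / 2) *
          (qpow q (Complex.I * z * ((n : ℂ) - 1)) - qpow q (-(Complex.I * z) * ((n : ℂ) - 1)))) /
        (qpow q (Complex.I * z) - qpow q (-(Complex.I * z))))

set_option maxHeartbeats 1000000

lemma key_id (q b c : ℂ) (h : b * c = 1) (m : ℕ) :
    q * (b^(2*m+2) - c^(2*m+2)) - (b^(2*m) - c^(2*m)) =
      (b - c) * (q * (b^(2*m+1) + c^(2*m+1)) +
        (q - 1) * ∑ k ∈ Finset.range m, (b^(2*k+1) + c^(2*k+1))) := by
  induction m with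
  | zero => simp; ring
  | succ m ih =>
      rw [Finset.sum_range_succ]
      linear_combination ih + (q * (b^(2*m+2) - c^(2*m+2)) - (b^(2*m) - c^(2*m))) * h

lemma phi_repr (q : ℝ) (hq : 0 < q) (z : ℂ) (m : ℕ)
    (hne : Complex.exp (Complex.I * z * (Real.log q : ℂ)) ≠
      Complex.exp (-(Complex.I * z) * (Real.log q : ℂ))) :
    phiSph q z (2*m+1) =
      qpow q (-(((2*m+1 : ℕ) : ℂ)) / 2) * (1 / ((q:ℂ)+1)) *
        ((q:ℂ) * (Complex.exp (Complex.I * z * (Real.log q : ℂ))^(2*m+1) +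
            Complex.exp (-(Complex.I * z) * (Real.log q : ℂ))^(2*m+1)) +
          ((q:ℂ)-1) * ∑ k ∈ Finset.range m,
            (Complex.exp (Complex.I * z * (Real.log q : ℂ))^(2*k+1) +
             Complex.exp (-(Complex.I * z) * (Real.log q : ℂ))^(2*k+1))) := by
  set L : ℂ := (Real.log q : ℂ) with hL
  set B : ℂ := Complex.exp (Complex.I * z * L) with hB
  set C : ℂ := Complex.exp (-(Complex.I * z) * L) with hC
  have hBC : B * C = 1 := by
    rw [hB, hC, ← Complex.exp_add]
    rw [show Complex.I * z * L + -(Complex.I * z) * L = 0 by ring, Complex.exp_zero]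
  have hsub : B - C ≠ 0 := sub_ne_zero.mpr hne
  have hexpL : Complex.exp L = (q : ℂ) := by
    rw [hL, ← Complex.ofReal_exp, Real.exp_log hq]
  have e1 : qpow q (Complex.I * z * (((2*m+1 : ℕ) : ℂ) + 1)) = B^(2*m+2) := by
    rw [qpow, hB, ← Complex.exp_nat_mul]
    congr 1
    push_cast
    ring
  have e2 : qpow q (-(Complex.I * z) * (((2*m+1 : ℕ) : ℂ) + 1)) = C^(2*m+2) := by
    rw [qpow, hC, ← Complex.exp_nat_mul]
    congr 1
    push_cast
    ring
  have e3 : qpow q (Complex.I * z * (((2*m+1 : ℕ) : ℂ) - 1)) = B^(2*m) := by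
    rw [qpow, hB, ← Complex.exp_nat_mul]
    congr 1
    push_cast
    ring
  have e4 : qpow q (-(Complex.I * z) * (((2*m+1 : ℕ) : ℂ) - 1)) = C^(2*m) := by
    rw [qpow, hC, ← Complex.exp_nat_mul]
    congr 1
    push_cast
    ring
  have e5 : qpow q (Complex.I * z) = B := by rw [qpow, hB]
  have e6 : qpow q (-(Complex.I * z)) = C := by rw [qpow, hC]
  have e7 : qpow q (1 - ((2*m+1 : ℕ) : ℂ) / 2) = (q : ℂ) * qpow q (-(((2*m+1 : ℕ) : ℂ)) / 2) := by
    rw [qpow, qpow, ← hexpL, ← Complex.exp_add]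
    congr 1
    ring
  rw [phiSph, if_neg (by omega)]
  rw [e1, e2, e3, e4, e5, e6, e7]
  have hkey := key_id (q:ℂ) B C hBC m
  set Q : ℂ := qpow q (-(((2*m+1 : ℕ) : ℂ)) / 2) with hQ
  have hnum : (q:ℂ) * Q * (B^(2*m+2) - C^(2*m+2)) - Q * (B^(2*m) - C^(2*m)) =
      (B - C) * (Q * ((q:ℂ) * (B^(2*m+1) + C^(2*m+1)) +
        ((q:ℂ) - 1) * ∑ k ∈ Finset.range m, (B^(2*k+1) + C^(2*k+1)))) := by
    linear_combination Q * hkey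
  rw [hnum, mul_comm (B - C), mul_div_assoc, div_self hsub, mul_one]
  ring

/-- For `δ ∈ [-1/2, 0)` and every `m ≥ 0`: `φ_{iδ}(2m+1)` is a positive real,
`|φ_{α+iδ}(2m+1)| < φ_{iδ}(2m+1)` for real `α ∈ (-τ/2, τ/2) \ {0}`, and
`φ_{τ/2+iδ}(2m+1) = -φ_{iδ}(2m+1)`. -/
theorem stmt9 (q : ℝ) (hq : 1 < q) (δ : ℝ) (hδ : δ ∈ Set.Ico (-(1/2) : ℝ) 0) (m : ℕ) :
    ((phiSph q (Complex.I * (δ : ℂ)) (2 * m + 1)).im = 0 ∧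
      0 < (phiSph q (Complex.I * (δ : ℂ)) (2 * m + 1)).re) ∧
    (∀ α : ℝ, -(tauq q) / 2 < α → α < tauq q / 2 → α ≠ 0 →
      ‖phiSph q ((α : ℂ) + Complex.I * (δ : ℂ)) (2 * m + 1)‖ <
        (phiSph q (Complex.I * (δ : ℂ)) (2 * m + 1)).re) ∧
    phiSph q (((tauq q / 2 : ℝ) : ℂ) + Complex.I * (δ : ℂ)) (2 * m + 1) =
      -phiSph q (Complex.I * (δ : ℂ)) (2 * m + 1) := by
  obtain ⟨hδ1, hδ2⟩ := hδ
  have hq0 : (0:ℝ) < q := lt_trans one_pos hq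
  have hL : 0 < Real.log q := Real.log_pos hq
  set L : ℝ := Real.log q with hLdef
  have hδL : 0 < -(δ * L) := by nlinarith
  set r : ℝ := Real.exp (-(δ * L)) with hrdef
  set s : ℝ := Real.exp (δ * L) with hsdef
  have hr0 : 0 < r := Real.exp_pos _
  have hs0 : 0 < s := Real.exp_pos _
  have hrs : r * s = 1 := by rw [hrdef, hsdef, ← Real.exp_add]; simp
  -- denominator nonzero, generic
  have hne_gen : ∀ w : ℂ, (Complex.I * w * ((L:ℝ):ℂ)).re = -(δ*L) →
      Complex.exp (Complex.I*w*((L:ℝ):ℂ)) ≠ Complex.exp (-(Complex.I*w)*((L:ℝ):ℂ)) := by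
    intro w hw hcon
    have h2 : (-(Complex.I*w)*((L:ℝ):ℂ)).re = δ*L := by
      rw [show -(Complex.I*w)*((L:ℝ):ℂ) = -(Complex.I*w*((L:ℝ):ℂ)) by ring, Complex.neg_re, hw]
      ring
    have h3 := congrArg (‖·‖) hcon
    rw [Complex.norm_exp, Complex.norm_exp, hw, h2, Real.exp_eq_exp] at h3
    linarith
  have hre0 : (Complex.I * (Complex.I*(δ:ℂ)) * ((L:ℝ):ℂ)).re = -(δ*L) := by
    simp [Complex.mul_re, Complex.mul_im]
  have hre1 : ∀ x : ℝ, (Complex.I * ((x:ℂ) + Complex.I*(δ:ℂ)) * ((L:ℝ):ℂ)).re = -(δ*L) := by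
    intro x
    simp [Complex.mul_re, Complex.mul_im]
  -- value at z = iδ
  have hB0 : Complex.exp (Complex.I * (Complex.I*(δ:ℂ)) * ((L:ℝ):ℂ)) = ((r:ℝ):ℂ) := by
    rw [hrdef, Complex.ofReal_exp]
    congr 1
    push_cast
    linear_combination ((δ:ℂ)*((L:ℝ):ℂ)) * Complex.I_sq
  have hC0 : Complex.exp (-(Complex.I * (Complex.I*(δ:ℂ))) * ((L:ℝ):ℂ)) = ((s:ℝ):ℂ) := by
    rw [hsdef, Complex.ofReal_exp]
    congr 1
    push_cast
    linear_combination (-(δ:ℂ)*((L:ℝ):ℂ)) * Complex.I_sq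
  have hE : qpow q (-(((2*m+1 : ℕ)):ℂ)/2) = ((Real.exp (-((2*m+1:ℝ))/2*L) : ℝ) : ℂ) := by
    rw [qpow, Complex.ofReal_exp]
    congr 1
    push_cast
    ring
  have hphi0 : phiSph q (Complex.I * (δ:ℂ)) (2*m+1) =
      ((Real.exp (-((2*m+1:ℝ))/2*L) * (1/(q+1)) * (q * (r^(2*m+1) + s^(2*m+1)) +
        (q-1) * ∑ k ∈ Finset.range m, (r^(2*k+1)+s^(2*k+1))) : ℝ) : ℂ) := by
    rw [phi_repr q hq0 _ m (hne_gen _ hre0), hB0, hC0, hE]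
    push_cast
    ring
  set E : ℝ := Real.exp (-((2*m+1:ℝ))/2*L) with hEdef
  have hE0 : 0 < E := Real.exp_pos _
  set Rsum : ℝ := q * (r^(2*m+1) + s^(2*m+1)) +
      (q-1) * ∑ k ∈ Finset.range m, (r^(2*k+1)+s^(2*k+1)) with hRdef
  have hRsum_pos : 0 < Rsum := by
    rw [hRdef]
    have h1 : 0 ≤ ∑ k ∈ Finset.range m, (r^(2*k+1)+s^(2*k+1)) :=
      Finset.sum_nonneg (fun k _ => by positivity)
    have h2 : 0 < q * (r^(2*m+1) + s^(2*m+1)) := by positivity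
    nlinarith
  have hre_phi0 : (phiSph q (Complex.I * (δ:ℂ)) (2*m+1)).re = E * (1/(q+1)) * Rsum := by
    rw [hphi0, Complex.ofReal_re]
  refine ⟨⟨by rw [hphi0]; simp, by rw [hre_phi0]; positivity⟩, ?_, ?_⟩
  · -- part (b)
    intro α hα1 hα2 hα0
    have hτ2 : tauq q / 2 = Real.pi / L := by rw [tauq]; ring
    have hαL1 : α * L < Real.pi := by
      have : α < Real.pi / L := by rw [← hτ2]; exact hα2
      exact (lt_div_iff₀ hL).mp this
    have hαL2 : -Real.pi < α * L := by
      have : (-Real.pi) / L < α := by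
        rw [neg_div]
        rw [← hτ2]
        linarith
      exact (div_lt_iff₀ hL).mp this
    have hsin : Real.sin (α * L) ≠ 0 := by
      intro h
      exact (mul_ne_zero hα0 (ne_of_gt hL))
        ((Real.sin_eq_zero_iff_of_lt_of_lt hαL2 hαL1).mp h)
    have hcos : Real.cos (2*(α*L)) < 1 := by
      have h1 : 0 < Real.sin (α*L)^2 := by positivity
      nlinarith [Real.cos_two_mul (α*L), Real.sin_sq_add_cos_sq (α*L)]
    set z : ℂ := (α:ℂ) + Complex.I*(δ:ℂ) with hzdef
    set B : ℂ := Complex.exp (Complex.I*z*((L:ℝ):ℂ)) with hBdef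
    set C : ℂ := Complex.exp (-(Complex.I*z)*((L:ℝ):ℂ)) with hCdef
    have habsB : ‖B‖ = r := by
      rw [hBdef, Complex.norm_exp, hre1 α, hrdef]
    have habsC : ‖C‖ = s := by
      rw [hCdef, Complex.norm_exp]
      rw [show -(Complex.I*z)*((L:ℝ):ℂ) = -(Complex.I*z*((L:ℝ):ℂ)) by ring, Complex.neg_re,
        hre1 α, hsdef]
      ring_nf
    have hBconjC : B * (starRingEnd ℂ) C = Complex.exp (((2*(α*L):ℝ):ℂ) * Complex.I) := by
      rw [hBdef, hCdef, ← Complex.exp_conj, ← Complex.exp_add]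
      congr 1
      rw [hzdef]
      simp only [map_mul, map_neg, map_add, Complex.conj_I, Complex.conj_ofReal]
      push_cast
      ring
    have hnormSq : Complex.normSq (B + C) = r^2 + s^2 + 2*Real.cos (2*(α*L)) := by
      rw [Complex.normSq_add, hBconjC, Complex.exp_ofReal_mul_I_re,
        Complex.normSq_eq_norm_sq, Complex.normSq_eq_norm_sq, habsB, habsC]
    have hlt : ‖B + C‖ < r + s := by
      have h1 : ‖B+C‖^2 < (r+s)^2 := by
        rw [Complex.sq_norm, hnormSq]; nlinarith
      exact lt_of_pow_lt_pow_left₀ 2 (by positivity) h1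
    have hterm : ∀ k : ℕ, ‖B^(2*k+1) + C^(2*k+1)‖ ≤ r^(2*k+1) + s^(2*k+1) := by
      intro k
      calc ‖B^(2*k+1) + C^(2*k+1)‖ ≤
          ‖B^(2*k+1)‖ + ‖C^(2*k+1)‖ := norm_add_le _ _
        _ = r^(2*k+1) + s^(2*k+1) := by rw [norm_pow, norm_pow, habsB, habsC]
    have hq1 : (0:ℝ) < q - 1 := by linarith
    have habs_sum : ‖∑ k ∈ Finset.range m, (B^(2*k+1)+C^(2*k+1))‖ ≤
        ∑ k ∈ Finset.range m, ‖B^(2*k+1)+C^(2*k+1)‖ :=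
      norm_sum_le (Finset.range m) (fun k => B^(2*k+1)+C^(2*k+1))
    have hcoef1 : ‖(q:ℂ) * (B^(2*m+1) + C^(2*m+1))‖ =
        q * ‖B^(2*m+1) + C^(2*m+1)‖ := by
      rw [norm_mul, Complex.norm_of_nonneg hq0.le]
    have hcoef2 : ‖((q:ℂ)-1) * ∑ k ∈ Finset.range m, (B^(2*k+1)+C^(2*k+1))‖ =
        (q-1) * ‖∑ k ∈ Finset.range m, (B^(2*k+1)+C^(2*k+1))‖ := by
      rw [show ((q:ℂ)-1) = (((q-1:ℝ)):ℂ) by push_cast; ring, norm_mul, Complex.norm_of_nonneg hq1.le]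
    have h0 : ‖(q:ℂ) * (B^(2*m+1) + C^(2*m+1)) +
          ((q:ℂ)-1) * ∑ k ∈ Finset.range m, (B^(2*k+1)+C^(2*k+1))‖ ≤
        q * ‖B^(2*m+1) + C^(2*m+1)‖ +
          (q-1) * ∑ k ∈ Finset.range m, ‖B^(2*k+1)+C^(2*k+1)‖ := by
      refine le_trans (norm_add_le _ _) ?_
      rw [hcoef1, hcoef2]
      have := mul_le_mul_of_nonneg_left habs_sum (le_of_lt hq1)
      linarith
    have habsbig : ‖(q:ℂ) * (B^(2*m+1) + C^(2*m+1)) +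
        ((q:ℂ)-1) * ∑ k ∈ Finset.range m, (B^(2*k+1)+C^(2*k+1))‖ < Rsum := by
      rcases Nat.eq_zero_or_pos m with hm | hm
      · have hm1 : Rsum = q * (r^(2*m+1) + s^(2*m+1)) := by
          rw [hRdef, hm]
          simp
        have hm2 : ∑ k ∈ Finset.range m, ‖B^(2*k+1)+C^(2*k+1)‖ = 0 := by
          rw [hm]; simp
        have hstrict : ‖B^(2*m+1) + C^(2*m+1)‖ < r^(2*m+1) + s^(2*m+1) := by
          rw [hm]
          simpa using hlt
        have := mul_lt_mul_of_pos_left hstrict hq0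
        rw [hm1]
        rw [hm2] at h0
        linarith
      · have hsum_lt : ∑ k ∈ Finset.range m, ‖B^(2*k+1)+C^(2*k+1)‖ <
            ∑ k ∈ Finset.range m, (r^(2*k+1)+s^(2*k+1)) := by
          apply Finset.sum_lt_sum (fun i _ => hterm i)
          exact ⟨0, Finset.mem_range.mpr hm, by simpa using hlt⟩
        have h2 : q * ‖B^(2*m+1) + C^(2*m+1)‖ ≤ q * (r^(2*m+1)+s^(2*m+1)) :=
          mul_le_mul_of_nonneg_left (hterm m) (le_of_lt hq0)
        have h3 : (q-1) * ∑ k ∈ Finset.range m, ‖B^(2*k+1)+C^(2*k+1)‖ <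
            (q-1) * ∑ k ∈ Finset.range m, (r^(2*k+1)+s^(2*k+1)) :=
          mul_lt_mul_of_pos_left hsum_lt hq1
        rw [hRdef]
        linarith
    rw [hre_phi0, phi_repr q hq0 z m (hne_gen z (hre1 α)), hE]
    rw [norm_mul, norm_mul, Complex.norm_of_nonneg hE0.le]
    rw [show (1:ℂ)/((q:ℂ)+1) = (((1/(q+1):ℝ)):ℂ) by push_cast; ring]
    rw [Complex.norm_of_nonneg (by positivity : (0:ℝ) ≤ 1/(q+1))]
    exact mul_lt_mul_of_pos_left habsbig (by positivity)
  · -- part (c)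
    have hπ : (tauq q/2) * L = Real.pi := by
      rw [tauq]
      field_simp
      rw [hLdef]
      ring
      exact mul_inv_cancel₀ (ne_of_gt hL)
    have hπc : ((tauq q : ℝ):ℂ)/2 * ((L:ℝ):ℂ) = ((Real.pi:ℝ):ℂ) := by
      rw [show ((tauq q : ℝ):ℂ)/2 * ((L:ℝ):ℂ) = (((tauq q/2*L : ℝ)):ℂ) by push_cast; ring, hπ]
    set z : ℂ := ((tauq q/2 : ℝ):ℂ) + Complex.I*(δ:ℂ) with hzdef
    have hzarg : Complex.I * z * ((L:ℝ):ℂ) = ((Real.pi:ℝ):ℂ)*Complex.I + ((-(δ*L):ℝ):ℂ) := by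
      rw [hzdef]
      push_cast
      linear_combination Complex.I * hπc + ((δ:ℂ)*((L:ℝ):ℂ)) * Complex.I_sq
    have hB' : Complex.exp (Complex.I*z*((L:ℝ):ℂ)) = -((r:ℝ):ℂ) := by
      rw [hzarg, Complex.exp_add, Complex.exp_pi_mul_I, hrdef, ← Complex.ofReal_exp]
      ring
    have hC' : Complex.exp (-(Complex.I*z)*((L:ℝ):ℂ)) = -((s:ℝ):ℂ) := by
      rw [show -(Complex.I*z)*((L:ℝ):ℂ) = -(Complex.I*z*((L:ℝ):ℂ)) by ring, hzarg]
      rw [neg_add, Complex.exp_add, Complex.exp_neg, Complex.exp_pi_mul_I, hsdef]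
      rw [show (-((-(δ*L):ℝ):ℂ)) = (((δ*L:ℝ)):ℂ) by push_cast; ring, ← Complex.ofReal_exp]
      norm_num
    rw [phi_repr q hq0 z m (hne_gen z (hre1 _)), phi_repr q hq0 _ m (hne_gen _ hre0),
      hB', hC', hB0, hC0]
    have hodd : ∀ k:ℕ, ((-((r:ℝ):ℂ))^(2*k+1) + (-((s:ℝ):ℂ))^(2*k+1)) =
        -((((r:ℝ):ℂ))^(2*k+1) + (((s:ℝ):ℂ))^(2*k+1)) := by
      intro k
      rw [Odd.neg_pow ⟨k, by ring⟩, Odd.neg_pow ⟨k, by ring⟩]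
      ring
    rw [show (∑ k ∈ Finset.range m, ((-((r:ℝ):ℂ))^(2*k+1) + (-((s:ℝ):ℂ))^(2*k+1))) =
        -∑ k ∈ Finset.range m, ((((r:ℝ):ℂ))^(2*k+1)+(((s:ℝ):ℂ))^(2*k+1)) from by
      rw [← Finset.sum_neg_distrib]
      exact Finset.sum_congr rfl (fun k _ => hodd k)]
    rw [hodd m]
    ring
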